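/- Let (Ω, 𝒢, ℙ) be a probability space, (F_t) a filtration, τ a random time, and G_t := ℙ(τ > t | F_t) with G_t > 0 a.s. for all t. Let 𝒢_t := F_t ∨ σ({τ ≤ u} : u ≤ t) be the progressively enlarged filtration. Then for any t ≤ s and any integrable F_s-measurable random variable U: 𝔼[1_{s < τ}·U | 𝒢_t] = 1_{t < τ}·G_t^{−1}·𝔼[G_s·U | F_t] almost surely. -/
import Mathlib

open MeasureTheory

lemma aux_exists_base {Ω : Type*} (Ft : MeasurableSpace Ω) (τ : Ω → ℝ) (t : ℝ)
    {A : Set Ω}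
    (hA : MeasurableSet[Ft ⊔ MeasurableSpace.generateFrom
        {A | ∃ u ≤ t, A = {ω | τ ω ≤ u}}] A) :
    ∃ B, MeasurableSet[Ft] B ∧ A ∩ {ω | t < τ ω} = B ∩ {ω | t < τ ω} := by
  set C := {ω | t < τ ω} with hC
  let m' : MeasurableSpace Ω :=
    { MeasurableSet' := fun A => ∃ B, MeasurableSet[Ft] B ∧ A ∩ C = B ∩ C
      measurableSet_empty := ⟨∅, (MeasurableSet.empty : MeasurableSet[Ft] ∅), rfl⟩
      measurableSet_compl := by
        rintro A ⟨B, hB, hAB⟩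
        refine ⟨Bᶜ, hB.compl, ?_⟩
        rw [Set.ext_iff] at hAB ⊢
        intro ω
        have := hAB ω
        simp only [Set.mem_inter_iff, Set.mem_compl_iff] at *
        tauto
      measurableSet_iUnion := by
        intro f hf
        choose B hB hBC using hf
        exact ⟨⋃ n, B n, MeasurableSet.iUnion hB, by
          rw [Set.iUnion_inter, Set.iUnion_inter]; exact Set.iUnion_congr hBC⟩ }
  have h1 : Ft ⊔ MeasurableSpace.generateFrom {A | ∃ u ≤ t, A = {ω | τ ω ≤ u}} ≤ m' := by
    refine sup_le ?_ (MeasurableSpace.generateFrom_le ?_)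
    · intro A hA
      show ∃ B, MeasurableSet[Ft] B ∧ A ∩ C = B ∩ C
      exact ⟨A, hA, rfl⟩
    rintro A ⟨u, hu, rfl⟩
    show ∃ B, MeasurableSet[Ft] B ∧ _ ∩ C = B ∩ C
    refine ⟨∅, (@MeasurableSet.empty Ω Ft), ?_⟩
    ext ω
    simp only [Set.mem_inter_iff, Set.mem_setOf_eq, Set.mem_empty_iff_false, hC, false_and,
      iff_false, not_and, not_lt]
    intro h1
    exact h1.trans hu
  exact h1 _ hA

lemma aux_min_meas {Ω : Type*} {m : MeasurableSpace Ω} {f : Ω → ℝ} (hf : Measurable[m] f)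
    (c : ℝ) : Measurable[m] fun ω => min ‖f ω‖ c :=
  hf.norm.min measurable_const

theorem stmt_13 {Ω : Type*} {mΩ : MeasurableSpace Ω} (μ : Measure Ω)
    [IsProbabilityMeasure μ] (F : ℝ → MeasurableSpace Ω)
    (hmono : ∀ s t : ℝ, s ≤ t → F s ≤ F t) (hle : ∀ t : ℝ, F t ≤ mΩ)
    (τ : Ω → ℝ) (hτ : Measurable τ)
    (G : ℝ → Ω → ℝ)
    (hG : ∀ u : ℝ, G u =ᵐ[μ] μ[Set.indicator {ω | u < τ ω} (fun _ => (1 : ℝ)) | F u])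
    (hGpos : ∀ u : ℝ, ∀ᵐ ω ∂μ, 0 < G u ω)
    (t s : ℝ) (hts : t ≤ s)
    (U : Ω → ℝ) (hU : Measurable[F s] U) (hUint : Integrable U μ) :
    μ[Set.indicator {ω | s < τ ω} U |
        (F t ⊔ MeasurableSpace.generateFrom {A | ∃ u ≤ t, A = {ω | τ ω ≤ u}})]
      =ᵐ[μ]
    Set.indicator {ω | t < τ ω}
      (fun ω => (G t ω)⁻¹ * (μ[fun ω' => G s ω' * U ω' | F t]) ω) := by
  have h𝒢le : (F t ⊔ MeasurableSpace.generateFrom {A | ∃ u ≤ t, A = {ω | τ ω ≤ u}}) ≤ mΩ := by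
    refine sup_le (hle t) (MeasurableSpace.generateFrom_le ?_)
    rintro A ⟨u, hu, rfl⟩
    exact measurableSet_le hτ measurable_const
  have hCs_meas : MeasurableSet[mΩ] {ω | s < τ ω} := measurableSet_lt measurable_const hτ
  have hC_meas : MeasurableSet[mΩ] {ω | t < τ ω} := measurableSet_lt measurable_const hτ
  have hC𝒢 : MeasurableSet[(F t ⊔ MeasurableSpace.generateFrom {A | ∃ u ≤ t, A = {ω | τ ω ≤ u}})] {ω | t < τ ω} := by
    have h1 : MeasurableSet[MeasurableSpace.generateFrom {A | ∃ u ≤ t, A = {ω | τ ω ≤ u}}]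
        {ω | τ ω ≤ t} := MeasurableSpace.measurableSet_generateFrom ⟨t, le_rfl, rfl⟩
    have h2 := h1.compl
    have h3 : {ω | τ ω ≤ t}ᶜ = {ω | t < τ ω} := by ext ω; simp [not_le]
    rw [h3] at h2
    have h4 : MeasurableSpace.generateFrom {A | ∃ u ≤ t, A = {ω | τ ω ≤ u}}
        ≤ F t ⊔ MeasurableSpace.generateFrom {A | ∃ u ≤ t, A = {ω | τ ω ≤ u}} := le_sup_right
    exact h4 _ h2
  -- the conditional survival processes
  set Dt : Ω → ℝ := μ[Set.indicator {ω | t < τ ω} (fun _ => (1:ℝ)) | F t] with hDt_def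
  set Ds : Ω → ℝ := μ[Set.indicator {ω | s < τ ω} (fun _ => (1:ℝ)) | F s] with hDs_def
  have hGt : G t =ᵐ[μ] Dt := by rw [hDt_def]; exact hG t
  have hGs : G s =ᵐ[μ] Ds := by rw [hDs_def]; exact hG s
  have hDt_pos : ∀ᵐ ω ∂μ, 0 < Dt ω := by
    filter_upwards [hGpos t, hGt] with ω h1 h2
    rw [← h2]; exact h1
  have hDt_meas : StronglyMeasurable[F t] Dt := stronglyMeasurable_condExp
  have hDs_meas : StronglyMeasurable[F s] Ds := stronglyMeasurable_condExp
  have hIndt_int : Integrable (Set.indicator {ω | t < τ ω} (fun _ => (1:ℝ))) μ :=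
    (integrable_const 1).indicator hC_meas
  have hInds_int : Integrable (Set.indicator {ω | s < τ ω} (fun _ => (1:ℝ))) μ :=
    (integrable_const 1).indicator hCs_meas
  have hDs_nonneg : 0 ≤ᵐ[μ] Ds := by
    rw [hDs_def]
    exact condExp_nonneg (Filter.Eventually.of_forall fun ω =>
      Set.indicator_nonneg (fun _ _ => zero_le_one) ω)
  have hDs_le_one : Ds ≤ᵐ[μ] fun _ => (1:ℝ) := by
    rw [hDs_def]
    have h := condExp_mono (μ := μ) (m := F s) hInds_int (integrable_const (1:ℝ))
      (Filter.Eventually.of_forall fun ω =>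
        Set.indicator_apply_le' (fun _ => le_rfl) (fun _ => zero_le_one))
    rwa [condExp_const (hle s)] at h
  have hDsU_int : Integrable (fun ω => Ds ω * U ω) μ := by
    refine hUint.mono
      (((hDs_meas.mono (hle s)).mul
        (hU.mono (hle s) le_rfl).stronglyMeasurable).aestronglyMeasurable) ?_
    filter_upwards [hDs_nonneg, hDs_le_one] with ω h0 h1
    rw [norm_mul]
    have hb : ‖Ds ω‖ ≤ 1 := by rw [Real.norm_eq_abs, abs_of_nonneg h0]; exact h1
    calc ‖Ds ω‖ * ‖U ω‖ ≤ 1 * ‖U ω‖ := mul_le_mul_of_nonneg_right hb (norm_nonneg _)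
      _ = ‖U ω‖ := one_mul _
  set H : Ω → ℝ := μ[fun ω => Ds ω * U ω | F t] with hH_def
  have hH_meas : StronglyMeasurable[F t] H := stronglyMeasurable_condExp
  have hH_int : Integrable H μ := integrable_condExp
  have hHG : (μ[fun ω' => G s ω' * U ω' | F t]) =ᵐ[μ] H := by
    rw [hH_def]
    refine condExp_congr_ae ?_
    filter_upwards [hGs] with ω h
    rw [h]
  -- conditional expectation at level s
  have hf_int : Integrable (Set.indicator {ω | s < τ ω} U) μ := hUint.indicator hCs_meas
  have hind_rw : Set.indicator {ω | s < τ ω} U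
      = U * Set.indicator {ω | s < τ ω} (fun _ => (1:ℝ)) := by
    ext ω
    by_cases h : ω ∈ {ω | s < τ ω}
    · simp [Set.indicator_of_mem h]
    · simp [Set.indicator_of_notMem h]
  have hcond_s : μ[Set.indicator {ω | s < τ ω} U | F s] =ᵐ[μ] fun ω => Ds ω * U ω := by
    have h1 := condExp_mul_of_stronglyMeasurable_left (m := F s) (μ := μ) hU.stronglyMeasurable
      (by rw [← hind_rw]; exact hf_int) hInds_int
    rw [← hind_rw, ← hDs_def] at h1
    exact h1.trans (Filter.Eventually.of_forall fun ω => mul_comm (U ω) (Ds ω))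
  -- the candidate
  set W : Ω → ℝ := fun ω => (Dt ω)⁻¹ * H ω with hW_def
  set Z : Ω → ℝ := Set.indicator {ω | t < τ ω} W with hZ_def
  have hW_measFt : Measurable[F t] W := (hDt_meas.measurable.inv).mul hH_meas.measurable
  have hW_sm : StronglyMeasurable[F t] W := hW_measFt.stronglyMeasurable
  have hFt𝒢 : F t ≤ (F t ⊔ MeasurableSpace.generateFrom {A | ∃ u ≤ t, A = {ω | τ ω ≤ u}}) := le_sup_left
  have hZ_meas𝒢 : Measurable[(F t ⊔ MeasurableSpace.generateFrom {A | ∃ u ≤ t, A = {ω | τ ω ≤ u}})] Z := by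
    rw [hZ_def]
    exact (hW_measFt.mono hFt𝒢 le_rfl).indicator hC𝒢
  have hZ_measmΩ : Measurable[mΩ] Z := hZ_meas𝒢.mono h𝒢le le_rfl
  have hZ_aesm : AEStronglyMeasurable Z μ := hZ_measmΩ.aestronglyMeasurable
  -- integrability of Z via truncation
  have hpsi_eq : ∀ n : ℕ, (fun ω => min ‖Z ω‖ (n:ℝ))
      = (fun ω => min ‖W ω‖ (n:ℝ)) * Set.indicator {ω | t < τ ω} (fun _ => (1:ℝ)) := by
    intro n
    ext ω
    by_cases h : ω ∈ {ω | t < τ ω}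
    · simp [hZ_def, Set.indicator_of_mem h]
    · simp [hZ_def, Set.indicator_of_notMem h, min_eq_left (Nat.cast_nonneg (α := ℝ) n)]
  have hpsi_meas : ∀ n : ℕ, Measurable[mΩ] (fun ω => min ‖Z ω‖ (n:ℝ)) := fun n =>
    hZ_measmΩ.norm.min measurable_const
  have hpsi_int : ∀ n : ℕ, Integrable (fun ω => min ‖Z ω‖ (n:ℝ)) μ := by
    intro n
    refine (integrable_const (n:ℝ)).mono' (hpsi_meas n).aestronglyMeasurable ?_
    refine Filter.Eventually.of_forall fun ω => ?_
    rw [Real.norm_eq_abs, abs_of_nonneg (le_min (norm_nonneg _) (Nat.cast_nonneg n))]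
    exact min_le_right _ _
  have hpsi_condexp : ∀ n : ℕ, μ[(fun ω => min ‖Z ω‖ (n:ℝ)) | F t]
      ≤ᵐ[μ] fun ω => ‖H ω‖ := by
    intro n
    have hc2 : StronglyMeasurable[F t] (fun ω => min ‖W ω‖ (n:ℝ)) :=
      (aux_min_meas hW_measFt (n:ℝ)).stronglyMeasurable
    have h1 := condExp_mul_of_stronglyMeasurable_left (m := F t) (μ := μ) hc2
      (by rw [← hpsi_eq n]; exact hpsi_int n) hIndt_int
    rw [← hpsi_eq n, ← hDt_def] at h1
    refine h1.trans_le ?_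
    filter_upwards [hDt_pos] with ω hpos
    simp only [Pi.mul_apply]
    have hWnorm : ‖W ω‖ = (Dt ω)⁻¹ * ‖H ω‖ := by
      simp only [hW_def]
      rw [Real.norm_eq_abs, Real.norm_eq_abs, abs_mul, abs_inv, abs_of_pos hpos]
    calc min ‖W ω‖ (n:ℝ) * Dt ω ≤ ‖W ω‖ * Dt ω :=
          mul_le_mul_of_nonneg_right (min_le_left _ _) hpos.le
      _ = ‖H ω‖ := by
          rw [hWnorm, mul_comm ((Dt ω)⁻¹) ‖H ω‖, mul_assoc, inv_mul_cancel₀ hpos.ne',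
            mul_one]
  have hpsi_int_le : ∀ n : ℕ, ∫ ω, min ‖Z ω‖ (n:ℝ) ∂μ ≤ ∫ ω, ‖H ω‖ ∂μ := by
    intro n
    rw [← integral_condExp (hle t) (f := fun ω => min ‖Z ω‖ (n:ℝ))]
    exact integral_mono_ae integrable_condExp hH_int.norm (hpsi_condexp n)
  have hZ_fin : HasFiniteIntegral Z μ := by
    rw [hasFiniteIntegral_iff_norm]
    have hmono' : Monotone (fun (n:ℕ) => fun ω => ENNReal.ofReal (min ‖Z ω‖ (n:ℝ))) := by
      intro a b hab ω
      exact ENNReal.ofReal_le_ofReal (min_le_min le_rfl (Nat.cast_le.2 hab))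
    have hsup : ∀ ω, (⨆ n : ℕ, ENNReal.ofReal (min ‖Z ω‖ (n:ℝ))) = ENNReal.ofReal ‖Z ω‖ := by
      intro ω
      refine le_antisymm (iSup_le fun n => ENNReal.ofReal_le_ofReal (min_le_left _ _)) ?_
      obtain ⟨n, hn⟩ := exists_nat_ge ‖Z ω‖
      refine le_trans ?_ (le_iSup _ n)
      rw [min_eq_left hn]
    calc ∫⁻ ω, ENNReal.ofReal ‖Z ω‖ ∂μ
        = ∫⁻ ω, ⨆ n : ℕ, ENNReal.ofReal (min ‖Z ω‖ (n:ℝ)) ∂μ := by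
          congr 1; ext ω; rw [hsup]
      _ = ⨆ n : ℕ, ∫⁻ ω, ENNReal.ofReal (min ‖Z ω‖ (n:ℝ)) ∂μ :=
          lintegral_iSup (fun n => (hpsi_meas n).ennreal_ofReal) hmono'
      _ ≤ ENNReal.ofReal (∫ ω, ‖H ω‖ ∂μ) := by
          refine iSup_le fun n => ?_
          rw [← ofReal_integral_eq_lintegral_ofReal (hpsi_int n)
            (Filter.Eventually.of_forall fun ω => le_min (norm_nonneg _) (Nat.cast_nonneg n))]
          exact ENNReal.ofReal_le_ofReal (hpsi_int_le n)
      _ < ⊤ := ENNReal.ofReal_lt_top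
  have hZ_int : Integrable Z μ := ⟨hZ_aesm, hZ_fin⟩
  -- conditional expectation of Z given F t is H
  have hZ_rw : Z = W * Set.indicator {ω | t < τ ω} (fun _ => (1:ℝ)) := by
    ext ω
    by_cases h : ω ∈ {ω | t < τ ω}
    · simp [hZ_def, Set.indicator_of_mem h]
    · simp [hZ_def, Set.indicator_of_notMem h]
  have hcond_Z : μ[Z | F t] =ᵐ[μ] H := by
    have h1 := condExp_mul_of_stronglyMeasurable_left (m := F t) (μ := μ) hW_sm
      (by rw [← hZ_rw]; exact hZ_int) hIndt_int
    rw [← hZ_rw, ← hDt_def] at h1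
    refine h1.trans ?_
    filter_upwards [hDt_pos] with ω hpos
    simp only [Pi.mul_apply, hW_def]
    rw [mul_comm ((Dt ω)⁻¹) (H ω), mul_assoc, inv_mul_cancel₀ hpos.ne', mul_one]
  -- set integral equality
  have hsub : {ω | s < τ ω} ⊆ {ω | t < τ ω} := fun ω h => lt_of_le_of_lt hts h
  have hg_eq : ∀ A : Set Ω, MeasurableSet[(F t ⊔ MeasurableSpace.generateFrom {A | ∃ u ≤ t, A = {ω | τ ω ≤ u}})] A → μ A < ⊤ →
      ∫ ω in A, Z ω ∂μ = ∫ ω in A, Set.indicator {ω | s < τ ω} U ω ∂μ := by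
    intro A hA _
    obtain ⟨B, hB, hABC⟩ := aux_exists_base (F t) τ t hA
    have hBs : MeasurableSet[F s] B := hmono t s hts _ hB
    have hZA : ∫ ω in A, Z ω ∂μ = ∫ ω in B, Z ω ∂μ := by
      rw [hZ_def, setIntegral_indicator hC_meas, setIntegral_indicator hC_meas, hABC]
    have hZB : ∫ ω in B, Z ω ∂μ = ∫ ω in B, H ω ∂μ := by
      rw [← setIntegral_condExp (hle t) hZ_int hB]
      exact setIntegral_congr_ae (hle t _ hB) (hcond_Z.mono fun ω h _ => h)
    have hfA : ∫ ω in A, Set.indicator {ω | s < τ ω} U ω ∂μ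
        = ∫ ω in B, Set.indicator {ω | s < τ ω} U ω ∂μ := by
      rw [setIntegral_indicator hCs_meas, setIntegral_indicator hCs_meas]
      have h3 : A ∩ {ω | s < τ ω} = B ∩ {ω | s < τ ω} := by
        have h1 : A ∩ {ω | s < τ ω} = (A ∩ {ω | t < τ ω}) ∩ {ω | s < τ ω} := by
          rw [Set.inter_assoc, Set.inter_eq_self_of_subset_right hsub]
        have h2 : B ∩ {ω | s < τ ω} = (B ∩ {ω | t < τ ω}) ∩ {ω | s < τ ω} := by
          rw [Set.inter_assoc, Set.inter_eq_self_of_subset_right hsub]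
        rw [h1, h2, hABC]
      rw [h3]
    have hfB : ∫ ω in B, Set.indicator {ω | s < τ ω} U ω ∂μ = ∫ ω in B, H ω ∂μ := by
      rw [← setIntegral_condExp (hle s) hf_int hBs]
      have e1 : ∫ ω in B, (μ[Set.indicator {ω | s < τ ω} U|F s]) ω ∂μ
          = ∫ ω in B, Ds ω * U ω ∂μ :=
        setIntegral_congr_ae (hle s _ hBs) (hcond_s.mono fun ω h _ => h)
      rw [e1, ← setIntegral_condExp (hle t) hDsU_int hB, ← hH_def]
    rw [hZA, hZB, hfA, hfB]
  have hmain : Z =ᵐ[μ] μ[Set.indicator {ω | s < τ ω} U | (F t ⊔ MeasurableSpace.generateFrom {A | ∃ u ≤ t, A = {ω | τ ω ≤ u}})] :=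
    ae_eq_condExp_of_forall_setIntegral_eq h𝒢le hf_int
      (fun A _ _ => hZ_int.integrableOn) hg_eq
      ⟨Z, hZ_meas𝒢.stronglyMeasurable, Filter.EventuallyEq.rfl⟩
  refine hmain.symm.trans ?_
  filter_upwards [hGt, hHG] with ω h1 h2
  rw [hZ_def]
  by_cases h : ω ∈ {ω | t < τ ω}
  · rw [Set.indicator_of_mem h, Set.indicator_of_mem h]
    simp only [hW_def]
    rw [h1, h2]
  · rw [Set.indicator_of_notMem h, Set.indicator_of_notMem h]
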